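/- arXiv:1512.08193 — 2 statements merged into one kernel-verified Lean document; each statement's English description precedes it below -/
import Mathlib

section
/- If X is a standard Gaussian random variable and ε = log(X²), then the characteristic function of ε is E[exp(iεy)] = (1/√π) · 2^{iy} · Γ(1/2 + iy), where Γ is the complex Gamma function. -/
open MeasureTheory ProbabilityTheory
open scoped ENNReal NNReal

open Real Set Complex in
private theorem half_line_aux (y : ℝ) :
    ∫ x in Ioi (0:ℝ), Real.exp (-x^2/2) • Complex.exp (Complex.I * y * Real.log (x ^ 2)) =
      (2:ℂ)⁻¹ * ((2:ℂ) ^ ((1:ℂ)/2 + Complex.I * y) * Complex.Gamma (1/2 + Complex.I * y)) := by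
  have ha : (0:ℝ) < ((1:ℂ)/2 + Complex.I * y).re := by simp
  have key := Complex.integral_cpow_mul_exp_neg_mul_Ioi (a := 1/2 + Complex.I * y)
    (r := 1/2) ha (by norm_num)
  have hsub := MeasureTheory.integral_comp_rpow_Ioi
    (fun t : ℝ => (2:ℂ)⁻¹ * ((t:ℂ) ^ ((1/2 + Complex.I * y) - 1) *
      Complex.exp (-((((1:ℝ)/2 : ℝ) : ℂ) * (t:ℂ))))) (p := 2) two_ne_zero
  calc ∫ x in Ioi (0:ℝ), Real.exp (-x^2/2) • Complex.exp (Complex.I * y * Real.log (x ^ 2))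
      = ∫ x in Ioi (0:ℝ), (|2| * x ^ ((2:ℝ)-1)) •
          ((2:ℂ)⁻¹ * (((x ^ (2:ℝ) : ℝ) : ℂ) ^ ((1/2 + Complex.I * y) - 1) *
            Complex.exp (-((((1:ℝ)/2 : ℝ) : ℂ) * ((x ^ (2:ℝ) : ℝ) : ℂ))))) := by
        refine setIntegral_congr_fun measurableSet_Ioi (fun x hx => ?_)
        rw [mem_Ioi] at hx
        have h2 : x ^ (2:ℝ) = x ^ 2 := by
          rw [show (2:ℝ) = ((2:ℕ):ℝ) by norm_num, Real.rpow_natCast]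
        have h1 : x ^ ((2:ℝ)-1) = x := by norm_num
        have hx2 : (0:ℝ) < x ^ 2 := by positivity
        have hlog : Real.log (x ^ 2) = 2 * Real.log x := by
          rw [Real.log_pow]; push_cast; ring
        have hcpow : ((x ^ 2 : ℝ) : ℂ) ^ ((1/2 + Complex.I * y) - 1) =
            Complex.exp (Complex.I * y * (Real.log (x ^ 2) : ℝ)) * (x⁻¹ : ℝ) := by
          rw [Complex.cpow_def_of_ne_zero (by exact_mod_cast hx2.ne')]
          rw [← Complex.ofReal_log hx2.le]
          rw [show ((1/2 + Complex.I * y) - 1) = Complex.I * y - 1/2 by ring]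
          rw [mul_sub, Complex.exp_sub]
          have hden : Complex.exp ((Real.log (x^2) : ℂ) * (1/2)) = (x : ℂ) := by
            rw [show ((Real.log (x^2) : ℂ) * (1/2)) = ((Real.log (x^2) / 2 : ℝ) : ℂ) by
              push_cast; ring, ← Complex.ofReal_exp, hlog]
            norm_num [Real.exp_log hx]
          rw [hden, mul_comm ((Real.log (x^2):ℂ)) (Complex.I * y), div_eq_mul_inv,
            Complex.ofReal_inv]
        rw [h2, h1, hcpow]
        have hexp : Complex.exp (-((((1:ℝ)/2 : ℝ) : ℂ) * ((x ^ 2 : ℝ) : ℂ))) =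
            ((Real.exp (-x^2/2) : ℝ) : ℂ) := by
          rw [show -((((1:ℝ)/2 : ℝ) : ℂ) * ((x ^ 2 : ℝ) : ℂ)) = ((-x^2/2 : ℝ) : ℂ) by
            push_cast; ring, ← Complex.ofReal_exp]
        rw [hexp, Complex.real_smul, Complex.real_smul]
        push_cast
        have hxne : (x:ℂ) ≠ 0 := by exact_mod_cast hx.ne'
        field_simp
        ring_nf
        norm_num
      _ = ∫ t in Ioi (0:ℝ), (2:ℂ)⁻¹ * ((t:ℂ) ^ ((1/2 + Complex.I * y) - 1) *
            Complex.exp (-((((1:ℝ)/2 : ℝ) : ℂ) * (t:ℂ)))) := by simpa using hsub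
      _ = (2:ℂ)⁻¹ * ((2:ℂ) ^ ((1:ℂ)/2 + Complex.I * y) * Complex.Gamma (1/2 + Complex.I * y)) := by
        rw [integral_const_mul, key]
        norm_num

open Real Set Complex in
/-- If `X` is standard Gaussian and `ε = log(X²)`, then
`E[exp(iεy)] = (1/√π) · 2^{iy} · Γ(1/2 + iy)`. -/
theorem charFun_log_chi_squared (y : ℝ) :
    ∫ x : ℝ, Complex.exp (Complex.I * y * Real.log (x ^ 2)) ∂(gaussianReal 0 1) =
      (Real.sqrt Real.pi : ℂ)⁻¹ * (2 : ℂ) ^ (Complex.I * y) *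
        Complex.Gamma (1 / 2 + Complex.I * y) := by
  have hmeas : Measurable fun x : ℝ => Complex.exp (Complex.I * y * Real.log (x ^ 2)) := by
    measurability
  set F : ℝ → ℂ := fun x => Real.exp (-x^2/2) • Complex.exp (Complex.I * y * Real.log (x ^ 2))
    with hF
  have hnorm : ∀ x : ℝ, ‖F x‖ = Real.exp (-x^2/2) := by
    intro x
    simp only [hF, norm_smul, Real.norm_eq_abs, _root_.abs_of_nonneg (Real.exp_nonneg _),
      Complex.norm_exp]
    simp
  have hFint : Integrable F := by
    refine Integrable.mono' (g := fun x => Real.exp (-(1/2) * x^2))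
      (integrable_exp_neg_mul_sq (by norm_num)) ?_ ?_
    · exact (((measurable_id.pow_const 2).neg.div_const 2).exp.smul hmeas).aestronglyMeasurable
    · filter_upwards with x
      rw [hnorm x]
      apply le_of_eq; ring_nf
  have h1 : ∫ x, Complex.exp (Complex.I * y * Real.log (x^2)) ∂(gaussianReal 0 1)
      = (Real.sqrt (2*π))⁻¹ • ∫ x, F x := by
    rw [gaussianReal_of_var_ne_zero 0 one_ne_zero]
    have hd : gaussianPDF 0 1 = fun x => ((gaussianPDFReal 0 1 x).toNNReal : ℝ≥0∞) := rfl
    rw [hd, integral_withDensity_eq_integral_smul (measurable_gaussianPDFReal 0 1).real_toNNReal]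
    rw [← integral_smul]
    congr 1 with x
    rw [NNReal.smul_def, Real.coe_toNNReal _ (gaussianPDFReal_nonneg 0 1 x)]
    simp only [hF, gaussianPDFReal_def]
    rw [smul_smul]
    norm_num
  have h2 : ∫ x, F x = 2 * ∫ x in Ioi (0:ℝ), F x := by
    have heven : ∀ x : ℝ, F (-x) = F x := by
      intro x; simp [hF, neg_sq]
    have hiic : ∫ x in Iic (0:ℝ), F x = ∫ x in Ioi (0:ℝ), F x := by
      have h := integral_comp_neg_Ioi (c := (0:ℝ)) F
      rw [neg_zero] at h
      rw [← h]
      exact setIntegral_congr_fun measurableSet_Ioi fun x _ => heven x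
    rw [← integral_add_compl measurableSet_Ioi hFint, compl_Ioi, hiic]
    ring
  rw [h1, h2, half_line_aux y, Complex.real_smul]
  have hsqrt2 : (2:ℂ) ^ ((1:ℂ)/2) = ((Real.sqrt 2 : ℝ) : ℂ) := by
    rw [Real.sqrt_eq_rpow, Complex.ofReal_cpow (by norm_num : (0:ℝ) ≤ 2)]
    norm_num
  have hadd : (2:ℂ) ^ ((1:ℂ)/2 + Complex.I * y) =
      (2:ℂ) ^ ((1:ℂ)/2) * (2:ℂ) ^ (Complex.I * y) :=
    Complex.cpow_add _ _ two_ne_zero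
  rw [hadd, hsqrt2, Real.sqrt_mul (by norm_num : (0:ℝ) ≤ 2)]
  have h2ne : (Real.sqrt 2 : ℂ) ≠ 0 :=
    Complex.ofReal_ne_zero.mpr (Real.sqrt_ne_zero'.mpr two_pos)
  have hpne : (Real.sqrt π : ℂ) ≠ 0 :=
    Complex.ofReal_ne_zero.mpr (Real.sqrt_ne_zero'.mpr Real.pi_pos)
  push_cast
  field_simp
end

section
/- Let Θ ⊂ ℝ^p be compact and h : Θ × ℝ → ℝ be such that θ ↦ h(θ,y) is continuous for each y and y ↦ h(θ,y) is measurable for each θ, with a dominating function s satisfying |h(θ,y)| ≤ s(y) for all θ and E[s(Y₁)] < ∞. If (Y_i) is a stationary ergodic process, then sup_{θ∈Θ} |(1/n)∑_{i=1}^n h(θ,Y_i) − E[h(θ,Y₁)]| → 0 in probability as n → ∞, and θ ↦ E[h(θ,Y₁)] is continuous. -/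
open MeasureTheory Filter

set_option linter.unusedSectionVars false
set_option maxHeartbeats 1000000
set_option synthInstance.maxHeartbeats 1000000
open Topology
open scoped ENNReal NNReal

section ULLNAux

variable {Ω : Type*} [MeasurableSpace Ω] {μ : Measure Ω} [IsProbabilityMeasure μ] {T : Ω → Ω}

theorem lp_coeFn_sum {ι : Type*} (s : Finset ι) (f : ι → Lp ℝ 2 μ) :
    (↑↑(∑ i ∈ s, f i) : Ω → ℝ) =ᵐ[μ] fun ω => ∑ i ∈ s, (f i : Ω → ℝ) ω := by
  classical
  induction s using Finset.induction with
  | empty =>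
    simp only [Finset.sum_empty]
    exact Lp.coeFn_zero (E := ℝ) (p := 2) (μ := μ)
  | insert a s' hns ih =>
    rw [Finset.sum_insert hns]
    filter_upwards [Lp.coeFn_add (f a) (∑ i ∈ s', f i), ih] with ω h1 h2
    rw [h1]
    simp only [Pi.add_apply, h2, Finset.sum_insert hns]

/-- The Koopman operator on `L²` as a continuous linear map. -/
noncomputable def koopmanL2 (hT : MeasurePreserving T μ μ) : Lp ℝ 2 μ →L[ℝ] Lp ℝ 2 μ :=
  { toFun := Lp.compMeasurePreserving T hT
    map_add' := map_add _
    map_smul' := by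
      intro c g
      apply Lp.ext
      filter_upwards [Lp.coeFn_compMeasurePreserving (c • g) hT,
        hT.quasiMeasurePreserving.ae_eq_comp (Lp.coeFn_smul c g),
        Lp.coeFn_smul c (Lp.compMeasurePreserving T hT g),
        Lp.coeFn_compMeasurePreserving g hT] with ω h1 h2 h3 h4
      simp only [Function.comp_apply, Pi.smul_apply] at h1 h2 h3 h4 ⊢
      simp only [RingHom.id_apply]
      rw [h1, h2, h3, h4]
    cont := (Lp.isometry_compMeasurePreserving hT).continuous }

theorem koopmanL2_apply (hT : MeasurePreserving T μ μ) (g : Lp ℝ 2 μ) :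
    koopmanL2 hT g = Lp.compMeasurePreserving T hT g := rfl

theorem koopmanL2_norm_le (hT : MeasurePreserving T μ μ) : ‖koopmanL2 hT‖ ≤ 1 := by
  refine ContinuousLinearMap.opNorm_le_bound _ zero_le_one fun g => ?_
  rw [one_mul]
  exact le_of_eq (Lp.norm_compMeasurePreserving g hT)

theorem koopmanL2_iter_coeFn (hT : MeasurePreserving T μ μ) {g : Ω → ℝ} (hg : MemLp g 2 μ) :
    ∀ i : ℕ, (⇑(koopmanL2 hT))^[i] (hg.toLp g) =ᵐ[μ] fun ω => g (T^[i] ω) := by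
  intro i
  induction i with
  | zero => simpa using hg.coeFn_toLp
  | succ i ih =>
    rw [Function.iterate_succ_apply']
    have h1 : (koopmanL2 hT) ((⇑(koopmanL2 hT))^[i] (hg.toLp g)) =ᵐ[μ]
        (fun ω => ((⇑((⇑(koopmanL2 hT))^[i] (hg.toLp g)) : Ω → ℝ) (T ω))) :=
      Lp.coeFn_compMeasurePreserving _ hT
    have h2 := hT.quasiMeasurePreserving.ae_eq_comp ih
    filter_upwards [h1, h2] with ω e1 e2
    rw [e1]
    simpa [Function.comp, Function.iterate_succ_apply] using e2

theorem tim_L2 (hT : Ergodic T μ) {g : Ω → ℝ} (hgm : Measurable g) (hg : MemLp g 2 μ) :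
    TendstoInMeasure μ (fun n ω => birkhoffAverage ℝ T g n ω) atTop (fun _ => ∫ ω', g ω' ∂μ) := by
  set U := koopmanL2 (μ := μ) hT.toMeasurePreserving with hU
  set G : Lp ℝ 2 μ := hg.toLp g with hG
  -- the limit point
  obtain ⟨P, hPfix, hconv⟩ : ∃ P : Lp ℝ 2 μ, U P = P ∧
      Tendsto (birkhoffAverage ℝ (⇑U) _root_.id · G) atTop (𝓝 P) := by
    refine ⟨_, ?_, U.tendsto_birkhoffAverage_orthogonalProjection
      (koopmanL2_norm_le hT.toMeasurePreserving) G⟩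
    have := (Submodule.orthogonalProjectionOnto
      (U.eqLocus (1 : Lp ℝ 2 μ →L[ℝ] Lp ℝ 2 μ)) G).2
    rw [LinearMap.mem_eqLocus] at this
    simpa using this
  -- P is a.e. constant
  have hinv : (↑↑P : Ω → ℝ) ∘ T =ᵐ[μ] (↑↑P : Ω → ℝ) := by
    have h1 := Lp.coeFn_compMeasurePreserving P hT.toMeasurePreserving
    rw [← koopmanL2_apply, hPfix] at h1
    exact h1.symm
  obtain ⟨c, hc⟩ := hT.quasiErgodic.ae_eq_const_of_ae_eq_comp_ae (Lp.aestronglyMeasurable P) hinv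
  -- the coordinate functional given by inner product with the constant 1
  set one : Lp ℝ 2 μ := (memLp_const (1:ℝ)).toLp _ with hone
  have hint : ∀ f : Lp ℝ 2 μ, (inner ℝ f one : ℝ) = ∫ ω, (↑↑f : Ω → ℝ) ω ∂μ := by
    intro f
    rw [L2.inner_def]
    refine integral_congr_ae ?_
    filter_upwards [MemLp.coeFn_toLp (memLp_const (1:ℝ))] with ω hω
    rw [hone] at *
    rw [hω]
    simp [RCLike.inner_apply]
  -- coeFn of the Birkhoff averages
  have hUiter := koopmanL2_iter_coeFn hT.toMeasurePreserving hg
  have birk_coeFn : ∀ n : ℕ, (↑↑(birkhoffAverage ℝ (⇑U) _root_.id n G) : Ω → ℝ) =ᵐ[μ]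
      fun ω => birkhoffAverage ℝ T g n ω := by
    intro n
    have hsum : (↑↑(∑ i ∈ Finset.range n, (⇑U)^[i] G) : Ω → ℝ) =ᵐ[μ]
        fun ω => ∑ i ∈ Finset.range n, g (T^[i] ω) := by
      refine (lp_coeFn_sum _ _).trans ?_
      have : ∀ᵐ ω ∂μ, ∀ i : ℕ, ((⇑U)^[i] G : Ω → ℝ) ω = g (T^[i] ω) :=
        ae_all_iff.2 fun i => hUiter i
      filter_upwards [this] with ω hω
      exact Finset.sum_congr rfl fun i _ => hω i
    have hsmul := Lp.coeFn_smul ((n:ℝ)⁻¹) (∑ i ∈ Finset.range n, (⇑U)^[i] G) (μ := μ)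
    simp only [birkhoffAverage, birkhoffSum, _root_.id]
    filter_upwards [hsmul, hsum] with ω h1 h2
    rw [h1]
    simp only [Pi.smul_apply, h2, smul_eq_mul]
  -- identify the constant
  have hccont : Continuous fun f : Lp ℝ 2 μ => (inner ℝ f one : ℝ) :=
    continuous_id.inner continuous_const
  have htend1 : Tendsto (fun n => (inner ℝ (birkhoffAverage ℝ (⇑U) _root_.id n G) one : ℝ))
      atTop (𝓝 (inner ℝ P one)) := (hccont.tendsto P).comp hconv
  have hval : ∀ n : ℕ, 1 ≤ n →
      (inner ℝ (birkhoffAverage ℝ (⇑U) _root_.id n G) one : ℝ) = ∫ ω, g ω ∂μ := by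
    intro n hn
    rw [hint]
    have h1 : ∫ ω, (↑↑(birkhoffAverage ℝ (⇑U) _root_.id n G) : Ω → ℝ) ω ∂μ
        = ∫ ω, birkhoffAverage ℝ T g n ω ∂μ := integral_congr_ae (birk_coeFn n)
    rw [h1]
    have h2 : ∀ i : ℕ, ∫ ω, g (T^[i] ω) ∂μ = ∫ ω, g ω ∂μ := by
      intro i
      have hmap := (hT.toMeasurePreserving.iterate i).map_eq
      calc ∫ ω, g (T^[i] ω) ∂μ = ∫ y, g y ∂(Measure.map T^[i] μ) :=
            (integral_map (hT.toMeasurePreserving.iterate i).measurable.aemeasurable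
              (hgm.aestronglyMeasurable.mono_ac
                (Measure.absolutelyContinuous_of_eq hmap))).symm
        _ = ∫ ω, g ω ∂μ := by rw [hmap]
    simp only [birkhoffAverage, birkhoffSum]
    rw [integral_smul, integral_finset_sum]
    · rw [Finset.sum_congr rfl fun i _ => h2 i]
      simp only [Finset.sum_const, Finset.card_range, nsmul_eq_mul, smul_eq_mul]
      rw [← mul_assoc, inv_mul_cancel₀ (Nat.cast_ne_zero.mpr (Nat.one_le_iff_ne_zero.mp hn)), one_mul]
    · intro i _
      exact ((hT.toMeasurePreserving.iterate i).integrable_comp hgm.aestronglyMeasurable).mpr (hg.integrable one_le_two)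
  -- identify the constant with the mean
  have hcval : c = ∫ ω, g ω ∂μ := by
    have h2 : Tendsto (fun n => (inner ℝ (birkhoffAverage ℝ (⇑U) _root_.id n G) one : ℝ))
        atTop (𝓝 (∫ ω, g ω ∂μ)) := by
      refine Tendsto.congr' ?_ tendsto_const_nhds
      filter_upwards [eventually_ge_atTop 1] with n hn
      exact (hval n hn).symm
    have h3 : (inner ℝ P one : ℝ) = ∫ ω, g ω ∂μ := tendsto_nhds_unique htend1 h2
    have h4 : (inner ℝ P one : ℝ) = c := by
      rw [hint, integral_congr_ae hc]
      simp
    rw [← h4, h3]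
  have hPconst : (↑↑P : Ω → ℝ) =ᵐ[μ] fun _ => ∫ ω, g ω ∂μ := by
    rw [← hcval]; exact hc
  -- norm convergence
  have hnt : Tendsto (fun n => ‖birkhoffAverage ℝ (⇑U) _root_.id n G - P‖) atTop (𝓝 0) :=
    tendsto_iff_norm_sub_tendsto_zero.mp hconv
  have het : Tendsto (fun n => eLpNorm ((fun ω => birkhoffAverage ℝ T g n ω)
      - fun _ => ∫ ω', g ω' ∂μ) 2 μ) atTop (𝓝 0) := by
    have h0 : ∀ n : ℕ, eLpNorm ((fun ω => birkhoffAverage ℝ T g n ω)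
        - fun _ => ∫ ω', g ω' ∂μ) 2 μ
        = ENNReal.ofReal ‖birkhoffAverage ℝ (⇑U) _root_.id n G - P‖ := by
      intro n
      have he : ((fun ω => birkhoffAverage ℝ T g n ω) - fun _ => ∫ ω', g ω' ∂μ)
          =ᵐ[μ] ↑↑(birkhoffAverage ℝ (⇑U) _root_.id n G - P) := by
        filter_upwards [birk_coeFn n, hPconst,
          Lp.coeFn_sub (birkhoffAverage ℝ (⇑U) _root_.id n G) P] with ω h1 h2 h3
        simp only [Pi.sub_apply] at *
        rw [h3, h1, h2]
      rw [eLpNorm_congr_ae he, Lp.norm_def, ENNReal.ofReal_toReal (Lp.eLpNorm_ne_top _)]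
    refine Tendsto.congr (fun n => (h0 n).symm) ?_
    simpa [Function.comp_def, ofReal_norm_eq_enorm] using (ENNReal.continuous_ofReal.tendsto 0).comp hnt
  refine tendstoInMeasure_of_tendsto_eLpNorm (by norm_num) (fun n => ?_)
    aestronglyMeasurable_const het
  have : Measurable fun ω => birkhoffAverage ℝ T g n ω := by
    simp only [birkhoffAverage, birkhoffSum]
    exact Measurable.const_smul (Finset.measurable_sum (Finset.range n) (fun i _ =>
      hgm.comp (hT.measurable.iterate i))) ((n:ℝ)⁻¹)
  exact this.aestronglyMeasurable

theorem birkhoffAverage_measurable (hT : Measurable T) {g : Ω → ℝ} (hgm : Measurable g) (n : ℕ) :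
    Measurable fun ω => birkhoffAverage ℝ T g n ω := by
  simp only [birkhoffAverage, birkhoffSum]
  exact Measurable.const_smul (Finset.measurable_sum (Finset.range n) (fun i _ =>
    hgm.comp (hT.iterate i))) ((n:ℝ)⁻¹)

/-- The birkhoff average is an `L¹` contraction. -/
theorem integral_abs_birkhoffAverage_le (hT : MeasurePreserving T μ μ) {g : Ω → ℝ}
    (hgm : Measurable g) (hgi : Integrable g μ) (n : ℕ) :
    ∫ ω, |birkhoffAverage ℝ T g n ω| ∂μ ≤ ∫ ω, |g ω| ∂μ := by
  have hint : ∀ i : ℕ, Integrable (fun ω => g (T^[i] ω)) μ := fun i =>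
    ((hT.iterate i).integrable_comp hgm.aestronglyMeasurable).mpr hgi
  have habs : ∀ ω, |birkhoffAverage ℝ T g n ω| ≤
      (n:ℝ)⁻¹ * ∑ i ∈ Finset.range n, |g (T^[i] ω)| := by
    intro ω
    simp only [birkhoffAverage, birkhoffSum, smul_eq_mul, abs_mul, abs_inv, Nat.abs_cast]
    exact mul_le_mul_of_nonneg_left (Finset.abs_sum_le_sum_abs _ _)
      (by positivity)
  have hbint : Integrable (fun ω => birkhoffAverage ℝ T g n ω) μ := by
    simp only [birkhoffAverage, birkhoffSum]
    exact (integrable_finset_sum _ fun i _ => hint i).smul ((n:ℝ)⁻¹)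
  have h1 : ∫ ω, |birkhoffAverage ℝ T g n ω| ∂μ ≤
      ∫ ω, (n:ℝ)⁻¹ * ∑ i ∈ Finset.range n, |g (T^[i] ω)| ∂μ := by
    refine integral_mono hbint.abs ?_ habs
    exact (integrable_finset_sum _ fun i _ => (hint i).abs).const_mul _
  refine h1.trans ?_
  have h2 : ∀ i : ℕ, ∫ ω, |g (T^[i] ω)| ∂μ = ∫ ω, |g ω| ∂μ := by
    intro i
    have hmap := (hT.iterate i).map_eq
    calc ∫ ω, |g (T^[i] ω)| ∂μ = ∫ y, |g y| ∂(Measure.map T^[i] μ) :=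
          (integral_map (hT.iterate i).measurable.aemeasurable
            (hgm.abs.aestronglyMeasurable.mono_ac
              (Measure.absolutelyContinuous_of_eq hmap))).symm
      _ = ∫ ω, |g ω| ∂μ := by rw [hmap]
  rw [integral_const_mul, integral_finset_sum _ (fun i _ => (hint i).abs)]
  rw [Finset.sum_congr rfl fun i _ => h2 i]
  simp only [Finset.sum_const, Finset.card_range, nsmul_eq_mul]
  rcases Nat.eq_zero_or_pos n with hn | hn
  · subst hn
    simp [integral_nonneg (f := fun ω => |g ω|) (fun ω => abs_nonneg (g ω))]
  · rw [← mul_assoc, inv_mul_cancel₀ (Nat.cast_ne_zero.mpr hn.ne'), one_mul]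

theorem tim_L1 (hT : Ergodic T μ) {g : Ω → ℝ} (hgm : Measurable g) (hgi : Integrable g μ) :
    TendstoInMeasure μ (fun n ω => birkhoffAverage ℝ T g n ω) atTop (fun _ => ∫ ω', g ω' ∂μ) := by
  rw [tendstoInMeasure_iff_dist]
  intro δ hδ
  rw [ENNReal.tendsto_atTop_zero]
  intro η hη
  set ηr : ℝ≥0∞ := min η 1 with hηr
  have hηr0 : ηr ≠ 0 := by
    simp only [hηr, ne_eq, min_eq_iff]
    intro hc
    rcases hc with ⟨h1, _⟩ | ⟨h1, _⟩
    · exact hη.ne' h1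
    · exact one_ne_zero h1
  have hηrtop : ηr ≠ ∞ := ne_top_of_le_ne_top ENNReal.one_ne_top (min_le_right _ _)
  set a : ℝ := ηr.toReal with ha
  have ha0 : 0 < a := ENNReal.toReal_pos hηr0 hηrtop
  set ε₀ : ℝ := min (δ/6) ((δ/3) * (a/2)) with hε₀
  have hε₀0 : 0 < ε₀ := lt_min (by positivity) (by positivity)
  -- truncations
  set gM : ℕ → Ω → ℝ := fun M ω => max (-(M:ℝ)) (min (M:ℝ) (g ω)) with hgM
  have hgMmeas : ∀ M, Measurable (gM M) := fun M =>
    measurable_const.max (measurable_const.min hgm)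
  have hgMbdd : ∀ M ω, |gM M ω| ≤ (M:ℝ) :=
    fun M ω => abs_le.mpr ⟨le_max_left _ _,
      max_le (neg_le_self (Nat.cast_nonneg M)) (min_le_left _ _)⟩
  have hgM2 : ∀ M, MemLp (gM M) 2 μ := fun M =>
    MemLp.of_bound (hgMmeas M).aestronglyMeasurable (M:ℝ)
      (ae_of_all μ fun ω => by simpa [Real.norm_eq_abs] using hgMbdd M ω)
  have hgMint : ∀ M, Integrable (gM M) μ := fun M => (hgM2 M).integrable one_le_two
  have hdiff_le : ∀ M ω, |g ω - gM M ω| ≤ |g ω| := by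
    intro M ω
    have hM0 : (0:ℝ) ≤ M := Nat.cast_nonneg M
    rcases le_total (g ω) (-(M:ℝ)) with h | h
    · have h1 : gM M ω = -(M:ℝ) := by
        simp only [hgM]
        rw [min_eq_right (h.trans (neg_le_self hM0)), max_eq_left h]
      have hg0 : g ω ≤ 0 := h.trans (neg_nonpos.mpr hM0)
      rw [h1, abs_of_nonpos (by linarith), abs_of_nonpos hg0]
      linarith
    · rcases le_total ((M:ℝ)) (g ω) with h2 | h2
      · have h1 : gM M ω = (M:ℝ) := by
          simp only [hgM]
          rw [min_eq_left h2, max_eq_right (neg_le_self hM0)]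
        have hg0 : (0:ℝ) ≤ g ω := hM0.trans h2
        rw [h1, abs_of_nonneg (by linarith), abs_of_nonneg hg0]
        linarith
      · have h1 : gM M ω = g ω := by
          simp only [hgM]
          rw [min_eq_right h2, max_eq_right h]
        rw [h1]
        simp [abs_nonneg]
  have htend : Tendsto (fun M => ∫ ω, |g ω - gM M ω| ∂μ) atTop (𝓝 0) := by
    have h0 : (0:ℝ) = ∫ (_ : Ω), (0:ℝ) ∂μ := by simp
    rw [h0]
    refine tendsto_integral_of_dominated_convergence (fun ω => |g ω|)
      (fun M => ((hgm.sub (hgMmeas M)).abs).aestronglyMeasurable) hgi.abs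
      (fun M => ae_of_all μ fun ω => by
        simpa [Real.norm_eq_abs, abs_abs] using hdiff_le M ω) ?_
    refine ae_of_all μ fun ω => ?_
    refine Tendsto.congr' ?_ tendsto_const_nhds
    filter_upwards [eventually_ge_atTop ⌈|g ω|⌉₊] with M hM
    have hb : |g ω| ≤ (M:ℝ) := (Nat.ceil_le.mp hM)
    have h1 : gM M ω = g ω := by
      simp only [hgM]
      rw [min_eq_right (le_trans (le_abs_self _) hb),
        max_eq_right (le_trans (neg_le_neg hb) (neg_abs_le _))]
    rw [h1]
    simp
  obtain ⟨M, hM⟩ : ∃ M, ∫ ω, |g ω - gM M ω| ∂μ ≤ ε₀ := by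
    obtain ⟨M, hM⟩ := (htend.eventually_lt_const hε₀0).exists
    exact ⟨M, hM.le⟩
  set r : Ω → ℝ := fun ω => g ω - gM M ω with hr
  have hrmeas : Measurable r := hgm.sub (hgMmeas M)
  have hrint : Integrable r μ := hgi.sub (hgMint M)
  -- split the Birkhoff average
  have hsplit : ∀ n ω, birkhoffAverage ℝ T g n ω =
      birkhoffAverage ℝ T (gM M) n ω + birkhoffAverage ℝ T r n ω := by
    intro n ω
    simp only [birkhoffAverage, birkhoffSum, hr]
    rw [← smul_add, ← Finset.sum_add_distrib]
    congr 1
    exact Finset.sum_congr rfl fun i _ => by ring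
  have hIsplit : |∫ ω, gM M ω ∂μ - ∫ ω, g ω ∂μ| ≤ ε₀ := by
    rw [abs_sub_comm, ← integral_sub hgi (hgMint M)]
    calc |∫ ω, (g ω - gM M ω) ∂μ| ≤ ∫ ω, |g ω - gM M ω| ∂μ := by
          simpa [Real.norm_eq_abs] using norm_integral_le_integral_norm (fun ω => g ω - gM M ω)
      _ ≤ ε₀ := hM
  obtain ⟨N, hN⟩ := ENNReal.tendsto_atTop_zero.mp
    (tendstoInMeasure_iff_dist.mp (tim_L2 hT (hgMmeas M) (hgM2 M)) (δ/3) (by positivity)) (ηr/2)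
    (ENNReal.div_pos hηr0 (by norm_num))
  refine ⟨N, fun n hn => ?_⟩
  have hb2 : μ {ω | δ/3 ≤ |birkhoffAverage ℝ T r n ω|} ≤ ηr/2 := by
    have hbint : Integrable (fun ω => |birkhoffAverage ℝ T r n ω|) μ := by
      simp only [birkhoffAverage, birkhoffSum]
      exact ((integrable_finset_sum _ fun i _ =>
        ((hT.toMeasurePreserving.iterate i).integrable_comp
          hrmeas.aestronglyMeasurable).mpr hrint).smul ((n:ℝ)⁻¹)).abs
    have hmark := mul_meas_ge_le_integral_of_nonneg
      (ae_of_all μ fun ω => abs_nonneg _) hbint (δ/3)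
    have hle := integral_abs_birkhoffAverage_le hT.toMeasurePreserving hrmeas hrint n
    have h3 : (δ/3) * (μ {ω | δ/3 ≤ |birkhoffAverage ℝ T r n ω|}).toReal ≤ (δ/3) * (a/2) :=
      le_trans (le_trans hmark hle) (le_trans hM (min_le_right _ _))
    have h4 : (μ {ω | δ/3 ≤ |birkhoffAverage ℝ T r n ω|}).toReal ≤ a/2 :=
      le_of_mul_le_mul_left h3 (by positivity)
    have h5 : μ {ω | δ/3 ≤ |birkhoffAverage ℝ T r n ω|} ≠ ∞ := measure_ne_top μ _
    rw [← ENNReal.ofReal_toReal h5]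
    calc ENNReal.ofReal (μ {ω | δ/3 ≤ |birkhoffAverage ℝ T r n ω|}).toReal
        ≤ ENNReal.ofReal (a/2) := ENNReal.ofReal_le_ofReal h4
      _ = ηr/2 := by
          rw [ENNReal.ofReal_div_of_pos two_pos, ha, ENNReal.ofReal_toReal hηrtop]
          norm_num
  have hsubset : {ω | δ ≤ dist (birkhoffAverage ℝ T g n ω) (∫ ω', g ω' ∂μ)} ⊆
      {x | δ/3 ≤ dist (birkhoffAverage ℝ T (gM M) n x) (∫ ω', gM M ω' ∂μ)} ∪
      {ω | δ/3 ≤ |birkhoffAverage ℝ T r n ω|} := by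
    intro ω hω
    simp only [Set.mem_setOf_eq, Real.dist_eq, Set.mem_union] at hω ⊢
    by_contra hcon
    push_neg at hcon
    obtain ⟨h1, h2⟩ := hcon
    rw [hsplit n ω] at hω
    set X := birkhoffAverage ℝ T (gM M) n ω
    set Ya := birkhoffAverage ℝ T r n ω
    set I := ∫ ω', g ω' ∂μ
    set IM := ∫ ω', gM M ω' ∂μ
    have key : |X + Ya - I| ≤ |X - IM| + |Ya| + |IM - I| := by
      have e : X + Ya - I = ((X - IM) + Ya) + (IM - I) := by ring
      rw [e]
      exact (abs_add_le _ _).trans (add_le_add_left (abs_add_le _ _) _)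
    have hε₀δ : ε₀ ≤ δ/6 := min_le_left _ _
    have : |IM - I| ≤ δ/6 := le_trans hIsplit hε₀δ
    linarith
  calc μ {x | δ ≤ dist (birkhoffAverage ℝ T g n x) (∫ ω', g ω' ∂μ)}
      ≤ μ ({x | δ/3 ≤ dist (birkhoffAverage ℝ T (gM M) n x) (∫ ω', gM M ω' ∂μ)} ∪
        {ω | δ/3 ≤ |birkhoffAverage ℝ T r n ω|}) := measure_mono hsubset
    _ ≤ μ {x | δ/3 ≤ dist (birkhoffAverage ℝ T (gM M) n x) (∫ ω', gM M ω' ∂μ)} +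
        μ {ω | δ/3 ≤ |birkhoffAverage ℝ T r n ω|} := measure_union_le _ _
    _ ≤ ηr/2 + ηr/2 := add_le_add (hN n hn) hb2
    _ = ηr := ENNReal.add_halves ηr
    _ ≤ η := min_le_left _ _

end ULLNAux


theorem exists_bracket {E : Type*} [NormedAddCommGroup E] [NormedSpace ℝ E]
    [SecondCountableTopology E] [MeasurableSpace E]
    (Θ : Set E) (hΘ : IsCompact Θ)
    (h : E → ℝ → ℝ) (hcont : ∀ y, ContinuousOn (fun θ => h θ y) Θ)
    (hmeas : ∀ θ, Measurable (h θ)) (s : ℝ → ℝ)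
    (hdom : ∀ θ ∈ Θ, ∀ y, |h θ y| ≤ s y)
    {Ω : Type*} [MeasurableSpace Ω] {μ : Measure Ω} [IsProbabilityMeasure μ]
    (Y : Ω → ℝ) (hY : Measurable Y) (hs_int : Integrable (fun ω => s (Y ω)) μ)
    (θ₀ : E) (hθ₀ : θ₀ ∈ Θ) {ε : ℝ} (hε : 0 < ε) :
    ∃ (w : ℝ → ℝ) (ρ : ℝ), 0 < ρ ∧ Measurable w ∧
      (∀ y, 0 ≤ w y) ∧ (∀ y, w y ≤ 2 * s y) ∧
      (∀ θ ∈ Θ ∩ Metric.ball θ₀ ρ, ∀ y, |h θ y - h θ₀ y| ≤ w y) ∧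
      Integrable (fun ω => w (Y ω)) μ ∧ ∫ ω, w (Y ω) ∂μ ≤ ε := by
  classical
  -- the compact shrinking neighbourhoods
  set K : ℕ → Set E := fun k => Θ ∩ Metric.closedBall θ₀ (1/(k+1 : ℝ)) with hK
  have hKmem : ∀ k, θ₀ ∈ K k := fun k =>
    ⟨hθ₀, Metric.mem_closedBall_self (by positivity)⟩
  have hKsubΘ : ∀ k, K k ⊆ Θ := fun k => Set.inter_subset_left
  haveI hKne : ∀ k, Nonempty ↥(K k) := fun k => ⟨⟨θ₀, hKmem k⟩⟩
  -- dense sequences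
  set u : ∀ k : ℕ, ℕ → ↥(K k) := fun k => TopologicalSpace.denseSeq ↥(K k) with hu
  have hdense : ∀ k, DenseRange (u k) := fun k => TopologicalSpace.denseRange_denseSeq ↥(K k)
  -- the modulus functions
  set W : ℕ → ℝ → ℝ := fun k y => ⨆ n : ℕ, |h ((u k n : E)) y - h θ₀ y| with hW
  have hsnn : ∀ y, 0 ≤ s y := fun y => (abs_nonneg _).trans (hdom θ₀ hθ₀ y)
  have hbdd : ∀ k y, BddAbove (Set.range fun n => |h ((u k n : E)) y - h θ₀ y|) := by
    intro k y
    refine ⟨2 * s y, ?_⟩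
    rintro x ⟨n, rfl⟩
    calc |h ((u k n : E)) y - h θ₀ y| ≤ |h ((u k n : E)) y| + |h θ₀ y| := abs_sub _ _
      _ ≤ s y + s y := add_le_add (hdom _ (hKsubΘ k (u k n).2) y) (hdom θ₀ hθ₀ y)
      _ = 2 * s y := by ring
  have hWmeas : ∀ k, Measurable (W k) :=
    fun k => Measurable.iSup fun n => ((hmeas _).sub (hmeas θ₀)).abs
  have hWnn : ∀ k y, 0 ≤ W k y := fun k y =>
    (abs_nonneg (h ((u k 0 : E)) y - h θ₀ y)).trans (le_ciSup (hbdd k y) 0)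
  have hWle : ∀ k y, W k y ≤ 2 * s y := by
    intro k y
    refine ciSup_le fun n => ?_
    calc |h ((u k n : E)) y - h θ₀ y| ≤ |h ((u k n : E)) y| + |h θ₀ y| := abs_sub _ _
      _ ≤ s y + s y := add_le_add (hdom _ (hKsubΘ k (u k n).2) y) (hdom θ₀ hθ₀ y)
      _ = 2 * s y := by ring
  -- the key bound on K k
  have hWbound : ∀ k, ∀ θ ∈ K k, ∀ y, |h θ y - h θ₀ y| ≤ W k y := by
    intro k θ hθ y
    set φ : E → ℝ := fun θ' => |h θ' y - h θ₀ y| with hφ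
    have hφcont : ContinuousOn φ Θ := ((hcont y).sub continuousOn_const).abs
    have hφK : ContinuousWithinAt φ (K k) θ :=
      (hφcont.mono (hKsubΘ k)).continuousWithinAt hθ
    -- approximate θ by the dense sequence
    have hclos : (⟨θ, hθ⟩ : ↥(K k)) ∈ closure (Set.range (u k)) := by
      rw [(hdense k).closure_range]; trivial
    rw [Metric.mem_closure_range_iff] at hclos
    choose v hv using fun m : ℕ => hclos (1/(m+1 : ℝ)) (by positivity)
    have hvt : Tendsto (fun m => ((u k (v m) : E))) atTop (𝓝[K k] θ) := by
      rw [tendsto_nhdsWithin_iff]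
      constructor
      · rw [tendsto_iff_dist_tendsto_zero]
        have hb : ∀ m : ℕ, dist ((u k (v m) : E)) θ ≤ 1/(m+1 : ℝ) := by
          intro m
          have := (hv m).le
          rw [Subtype.dist_eq] at this
          simpa [dist_comm] using this
        refine squeeze_zero (fun m => dist_nonneg) hb ?_
        exact tendsto_one_div_add_atTop_nhds_zero_nat
      · exact Eventually.of_forall fun m => (u k (v m)).2
    have hφt : Tendsto (fun m => φ ((u k (v m) : E))) atTop (𝓝 (φ θ)) :=
      (hφK.tendsto).comp hvt
    exact le_of_tendsto hφt (Eventually.of_forall fun m => le_ciSup (hbdd k y) (v m))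
  -- pointwise convergence to 0
  have hWtend : ∀ y, Tendsto (fun k => W k y) atTop (𝓝 0) := by
    intro y
    rw [Metric.tendsto_atTop]
    intro ε' hε'
    have hc := (hcont y) θ₀ hθ₀
    rw [Metric.continuousWithinAt_iff] at hc
    obtain ⟨δ₀, hδ₀, hc⟩ := hc (ε'/2) (by positivity)
    obtain ⟨K₀, hK₀⟩ := exists_nat_gt (1/δ₀)
    refine ⟨K₀, fun k hk => ?_⟩
    have hrad : 1/(k+1 : ℝ) < δ₀ := by
      have hcast : (K₀:ℝ) ≤ (k:ℝ) := Nat.cast_le.mpr hk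
      rw [div_lt_iff₀ (by positivity)]
      rw [div_lt_iff₀ hδ₀] at hK₀
      nlinarith
    have hWk : W k y ≤ ε'/2 := by
      refine ciSup_le fun n => ?_
      have hmem := (u k n).2
      have hd : dist ((u k n : E)) θ₀ < δ₀ :=
        lt_of_le_of_lt (Metric.mem_closedBall.mp hmem.2) hrad
      have := hc (hKsubΘ k hmem) hd
      rw [Real.dist_eq] at this
      exact this.le
    rw [Real.dist_eq, sub_zero, abs_of_nonneg (hWnn k y)]
    linarith
  -- choose k with small integral
  have hWint : ∀ k, Integrable (fun ω => W k (Y ω)) μ := by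
    intro k
    refine Integrable.mono' (hs_int.const_mul 2) ((hWmeas k).comp hY).aestronglyMeasurable ?_
    exact ae_of_all μ fun ω => by
      rw [Real.norm_eq_abs, abs_of_nonneg (hWnn k _)]; exact hWle k _
  have hitend : Tendsto (fun k => ∫ ω, W k (Y ω) ∂μ) atTop (𝓝 0) := by
    have h0 : (0:ℝ) = ∫ (_ : Ω), (0:ℝ) ∂μ := by simp
    rw [h0]
    refine tendsto_integral_of_dominated_convergence (fun ω => 2 * s (Y ω))
      (fun k => ((hWmeas k).comp hY).aestronglyMeasurable) (hs_int.const_mul 2)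
      (fun k => ae_of_all μ fun ω => by
        rw [Real.norm_eq_abs, abs_of_nonneg (hWnn k _)]; exact hWle k _) ?_
    exact ae_of_all μ fun ω => hWtend (Y ω)
  obtain ⟨k, hk⟩ : ∃ k, ∫ ω, W k (Y ω) ∂μ ≤ ε := by
    obtain ⟨k, hk⟩ := (hitend.eventually_lt_const hε).exists
    exact ⟨k, hk.le⟩
  refine ⟨W k, 1/(k+1 : ℝ), by positivity, hWmeas k, hWnn k, hWle k, ?_, hWint k, hk⟩
  intro θ hθ y
  exact hWbound k θ ⟨hθ.1, Metric.ball_subset_closedBall hθ.2⟩ y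

/-- Uniform Law of Large Numbers for stationary ergodic sequences: the process is
`Y_i = Y ∘ T^{i}` with `T` ergodic measure-preserving. Under continuity in `θ`,
measurability in `y` and integrable domination, the supremum over a compact `Θ` of
the deviation of empirical means from the expectation tends to `0` in probability,
and `θ ↦ E[h(θ,Y₁)]` is continuous on `Θ`. -/
theorem uniform_law_of_large_numbers {Ω : Type*} [MeasurableSpace Ω]
    (μ : Measure Ω) [IsProbabilityMeasure μ]
    (T : Ω → Ω) (hT : Ergodic T μ)
    (Y : Ω → ℝ) (hY : Measurable Y)
    {p : ℕ} (Θ : Set (EuclideanSpace ℝ (Fin p))) (hΘ : IsCompact Θ) (hne : Θ.Nonempty)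
    (h : EuclideanSpace ℝ (Fin p) → ℝ → ℝ)
    (hcont : ∀ y, ContinuousOn (fun θ => h θ y) Θ)
    (hmeas : ∀ θ, Measurable (h θ))
    (s : ℝ → ℝ) (hs_meas : Measurable s)
    (hdom : ∀ θ ∈ Θ, ∀ y, |h θ y| ≤ s y)
    (hs_int : Integrable (fun ω => s (Y ω)) μ) :
    TendstoInMeasure μ
      (fun (n : ℕ) (ω : Ω) => sSup ((fun θ =>
        |(1 / (n : ℝ)) * ∑ i ∈ Finset.range n, h θ (Y (T^[i] ω)) -
          ∫ ω', h θ (Y ω') ∂μ|) '' Θ))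
      atTop (fun _ => 0) ∧
    ContinuousOn (fun θ => ∫ ω, h θ (Y ω) ∂μ) Θ := by
  classical
  have hint : ∀ θ ∈ Θ, Integrable (fun ω => h θ (Y ω)) μ := fun θ hθ =>
    Integrable.mono' hs_int ((hmeas θ).comp hY).aestronglyMeasurable
      (ae_of_all μ fun ω => by rw [Real.norm_eq_abs]; exact hdom θ hθ (Y ω))
  constructor
  · -- part 1 : uniform convergence in probability
    have hBA : ∀ (g : Ω → ℝ) (n : ℕ) (ω : Ω), birkhoffAverage ℝ T g n ω
        = (1/(n:ℝ)) * ∑ i ∈ Finset.range n, g (T^[i] ω) := by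
      intro g n ω
      simp [birkhoffAverage, birkhoffSum, smul_eq_mul, one_div]
    rw [tendstoInMeasure_iff_dist]
    intro δ hδ
    rw [ENNReal.tendsto_atTop_zero]
    intro η hη
    set ε : ℝ := δ/8 with hεdef
    have hε : 0 < ε := by positivity
    -- local brackets
    choose w ρ hρ hwmeas hwnn hwle hwbound hwint hwε using
      fun (θ₀ : EuclideanSpace ℝ (Fin p)) (hθ₀ : θ₀ ∈ Θ) =>
        exists_bracket Θ hΘ h hcont hmeas s hdom Y hY hs_int θ₀ hθ₀ hε
    -- finite subcover
    obtain ⟨t, hcover⟩ := hΘ.elim_nhds_subcover'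
      (fun θ₀ hθ₀ => Metric.ball θ₀ (ρ θ₀ hθ₀))
      (fun θ₀ hθ₀ => Metric.ball_mem_nhds θ₀ (hρ θ₀ hθ₀))
    -- events
    set A : ↥Θ → ℕ → Set Ω := fun x n =>
      {ω | ε ≤ dist (birkhoffAverage ℝ T (fun ω' => h x (Y ω')) n ω)
        (∫ ω', h x (Y ω') ∂μ)} with hA
    set B : ↥Θ → ℕ → Set Ω := fun x n =>
      {ω | ε ≤ dist (birkhoffAverage ℝ T (fun ω' => w x x.2 (Y ω')) n ω)
        (∫ ω', w x x.2 (Y ω') ∂μ)} with hB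
    have htendA : ∀ x : ↥Θ, Tendsto (fun n => μ (A x n)) atTop (𝓝 0) :=
      fun x => tendstoInMeasure_iff_dist.mp (tim_L1 hT ((hmeas x).comp hY) (hint x x.2)) ε hε
    have htendB : ∀ x : ↥Θ, Tendsto (fun n => μ (B x n)) atTop (𝓝 0) :=
      fun x => tendstoInMeasure_iff_dist.mp (tim_L1 hT ((hwmeas x x.2).comp hY) (hwint x x.2)) ε hε
    have htends : Tendsto (fun n => ∑ x ∈ t, (μ (A x n) + μ (B x n))) atTop (𝓝 0) := by
      have := tendsto_finset_sum t (fun x _ => ((htendA x).add (htendB x)))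
      simpa using this
    obtain ⟨N, hN⟩ := ENNReal.tendsto_atTop_zero.mp htends η hη
    refine ⟨N, fun n hn => ?_⟩
    -- the inclusion
    have hsub : {ω | δ ≤ dist (sSup ((fun θ =>
        |(1 / (n : ℝ)) * ∑ i ∈ Finset.range n, h θ (Y (T^[i] ω)) -
          ∫ ω', h θ (Y ω') ∂μ|) '' Θ)) 0} ⊆ ⋃ x ∈ t, (A x n ∪ B x n) := by
      intro ω hω
      simp only [Set.mem_setOf_eq, Real.dist_eq, sub_zero] at hω
      by_contra hnot
      simp only [Set.mem_iUnion, Set.mem_union, not_exists, not_or] at hnot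
      -- all events are good
      have hgood : ∀ x ∈ t,
          |(1/(n:ℝ)) * ∑ i ∈ Finset.range n, h x (Y (T^[i] ω)) - ∫ ω', h x (Y ω') ∂μ| < ε ∧
          |(1/(n:ℝ)) * ∑ i ∈ Finset.range n, w x x.2 (Y (T^[i] ω))
            - ∫ ω', w x x.2 (Y ω') ∂μ| < ε := by
        intro x hx
        obtain ⟨h1, h2⟩ := hnot x hx
        simp only [hA, hB, Set.mem_setOf_eq, Real.dist_eq, not_le, hBA] at h1 h2
        exact ⟨h1, h2⟩
      -- hence the sup is small
      have hsup : sSup ((fun θ =>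
          |(1 / (n : ℝ)) * ∑ i ∈ Finset.range n, h θ (Y (T^[i] ω)) -
            ∫ ω', h θ (Y ω') ∂μ|) '' Θ) ≤ δ/2 := by
        refine Real.sSup_le ?_ (by positivity)
        rintro z ⟨θ, hθ, rfl⟩
        -- pick a covering ball
        obtain ⟨x, hxt, hθx⟩ : ∃ x ∈ t, θ ∈ Metric.ball (x : EuclideanSpace ℝ (Fin p)) (ρ x x.2) := by
          have := hcover hθ
          simpa using this
        obtain ⟨hgA, hgB⟩ := hgood x hxt
        set wx := w x x.2
        have hwb : ∀ y, |h θ y - h x y| ≤ wx y := fun y =>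
          hwbound x x.2 θ ⟨hθ, hθx⟩ y
        -- the three term estimate
        set Sθ := (1/(n:ℝ)) * ∑ i ∈ Finset.range n, h θ (Y (T^[i] ω))
        set Sx := (1/(n:ℝ)) * ∑ i ∈ Finset.range n, h x (Y (T^[i] ω))
        set Sw := (1/(n:ℝ)) * ∑ i ∈ Finset.range n, wx (Y (T^[i] ω))
        set Iθ := ∫ ω', h θ (Y ω') ∂μ
        set Ix := ∫ ω', h x (Y ω') ∂μ
        set Iw := ∫ ω', wx (Y ω') ∂μ
        -- first: |Sθ - Sx| ≤ Sw
        have e1 : |Sθ - Sx| ≤ Sw := by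
          have : Sθ - Sx = (1/(n:ℝ)) * ∑ i ∈ Finset.range n,
              (h θ (Y (T^[i] ω)) - h x (Y (T^[i] ω))) := by
            simp only [Sθ, Sx, ← mul_sub, ← Finset.sum_sub_distrib]
          rw [this, abs_mul, abs_of_nonneg (by positivity : (0:ℝ) ≤ 1/(n:ℝ))]
          refine mul_le_mul_of_nonneg_left ?_ (by positivity)
          refine (Finset.abs_sum_le_sum_abs _ _).trans ?_
          exact Finset.sum_le_sum fun i _ => hwb _
        -- Sw is small
        have e2 : Sw ≤ 2*ε := by
          have : Sw - Iw ≤ |Sw - Iw| := le_abs_self _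
          have h3 : Iw ≤ ε := hwε x x.2
          nlinarith [hgB]
        -- third: |Ix - Iθ| ≤ ε
        have e3 : |Ix - Iθ| ≤ ε := by
          have hIint : Integrable (fun ω' => h x (Y ω') - h θ (Y ω')) μ :=
            (hint x x.2).sub (hint θ hθ)
          have : Ix - Iθ = ∫ ω', (h x (Y ω') - h θ (Y ω')) ∂μ :=
            (integral_sub (hint x x.2) (hint θ hθ)).symm
          rw [this]
          calc |∫ ω', (h x (Y ω') - h θ (Y ω')) ∂μ|
              ≤ ∫ ω', |h x (Y ω') - h θ (Y ω')| ∂μ := by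
                simpa [Real.norm_eq_abs] using
                  norm_integral_le_integral_norm (fun ω' => h x (Y ω') - h θ (Y ω'))
            _ ≤ ∫ ω', wx (Y ω') ∂μ := by
                refine integral_mono hIint.abs (hwint x x.2) fun ω' => ?_
                rw [abs_sub_comm]
                exact hwb _
            _ ≤ ε := hwε x x.2
        -- combine
        have : |Sθ - Iθ| ≤ |Sθ - Sx| + |Sx - Ix| + |Ix - Iθ| := by
          have e : Sθ - Iθ = (Sθ - Sx) + (Sx - Ix) + (Ix - Iθ) := by ring
          rw [e]
          exact (abs_add_le _ _).trans (add_le_add_left (abs_add_le _ _) _)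
        have h8 : ε = δ/8 := rfl
        calc |Sθ - Iθ| ≤ |Sθ - Sx| + |Sx - Ix| + |Ix - Iθ| := this
          _ ≤ Sw + |Sx - Ix| + ε := by
              exact add_le_add (add_le_add e1 le_rfl) e3
          _ ≤ 2*ε + ε + ε := by
              refine add_le_add (add_le_add e2 hgA.le) le_rfl
          _ = δ/2 := by rw [hεdef]; ring
      have hD0 : 0 ≤ sSup ((fun θ =>
          |(1 / (n : ℝ)) * ∑ i ∈ Finset.range n, h θ (Y (T^[i] ω)) -
            ∫ ω', h θ (Y ω') ∂μ|) '' Θ) := by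
        refine Real.sSup_nonneg ?_
        rintro z ⟨θ, hθ, rfl⟩
        exact abs_nonneg _
      rw [abs_of_nonneg hD0] at hω
      linarith
    calc μ {ω | δ ≤ dist (sSup ((fun θ =>
          |(1 / (n : ℝ)) * ∑ i ∈ Finset.range n, h θ (Y (T^[i] ω)) -
            ∫ ω', h θ (Y ω') ∂μ|) '' Θ)) 0}
        ≤ μ (⋃ x ∈ t, (A x n ∪ B x n)) := measure_mono hsub
      _ ≤ ∑ x ∈ t, μ (A x n ∪ B x n) := measure_biUnion_finset_le t _
      _ ≤ ∑ x ∈ t, (μ (A x n) + μ (B x n)) :=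
          Finset.sum_le_sum fun x _ => measure_union_le _ _
      _ ≤ η := hN n hn
  · -- part 2 : continuity of the limit
    intro θ₀ hθ₀
    refine continuousWithinAt_of_dominated ?_ ?_ hs_int ?_
    · exact Eventually.of_forall fun θ => ((hmeas θ).comp hY).aestronglyMeasurable
    · filter_upwards [self_mem_nhdsWithin] with θ hθ
      exact ae_of_all μ fun ω => by rw [Real.norm_eq_abs]; exact hdom θ hθ (Y ω)
    · exact ae_of_all μ fun ω => (hcont (Y ω)) θ₀ hθ₀
end
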